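/- arXiv:1807.10970 — 5 statements merged into one kernel-verified Lean document; each statement's English description precedes it below -/
import Mathlib

section
/- Let P be a Borel probability measure on ℝ with finite second moment that is symmetric about 0, and suppose that for some n ∈ ℕ the n-principal set of P is unique. Then this unique n-principal set α satisfies α = -α, i.e., it is symmetric about 0. -/
open MeasureTheory

/-- Distortion error of a finite set `β` with respect to `P`. -/
noncomputable def distortion (P : Measure ℝ) (β : Finset ℝ) : ℝ :=
  ∫ x, (⨅ b : β, (x - (b : ℝ)) ^ 2) ∂P

/-- The `n`-th quantization error of order 2 for `P`. -/
noncomputable def quantErr (P : Measure ℝ) (n : ℕ) : ℝ :=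
  sInf {v | ∃ β : Finset ℝ, β.Nonempty ∧ β.card ≤ n ∧ v = distortion P β}

/-- `α` is an `n`-principal set (optimal set of `n`-means) for `P`. -/
def IsPrincipal (P : Measure ℝ) (n : ℕ) (α : Finset ℝ) : Prop :=
  α.Nonempty ∧ α.card ≤ n ∧ distortion P α = quantErr P n

lemma iInf_image_neg_aux (α : Finset ℝ) (x : ℝ) :
    (⨅ b : (α.image (fun a => -a) : Finset ℝ), (x - (b : ℝ)) ^ 2)
      = ⨅ a : α, (x + (a : ℝ)) ^ 2 := by
  have h1 : Set.range (fun b : (α.image (fun a => -a) : Finset ℝ) => (x - (b : ℝ)) ^ 2)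
      = Set.range (fun a : α => (x + (a : ℝ)) ^ 2) := by
    have e1 : Set.range (fun b : (α.image (fun a => -a) : Finset ℝ) => (x - (b : ℝ)) ^ 2)
        = (fun b : ℝ => (x - b) ^ 2) '' (α.image (fun a => -a) : Set ℝ) := by
      rw [← Subtype.range_coe (s := ((α.image (fun a => -a) : Finset ℝ) : Set ℝ)),
        ← Set.range_comp]
      rfl
    have e2 : Set.range (fun a : α => (x + (a : ℝ)) ^ 2)
        = (fun a : ℝ => (x + a) ^ 2) '' (α : Set ℝ) := by
      rw [← Subtype.range_coe (s := (α : Set ℝ)), ← Set.range_comp]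
      rfl
    rw [e1, e2, Finset.coe_image, ← Set.image_comp]
    apply Set.image_congr
    intro a _
    simp only [Function.comp_apply]
    ring
  rw [iInf, iInf, h1]

lemma meas_iInf_add (α : Finset ℝ) :
    Measurable (fun x : ℝ => ⨅ a : α, (x + (a : ℝ)) ^ 2) := by
  exact Measurable.iInf fun a => by fun_prop

lemma distortion_image_neg (P : Measure ℝ) (α : Finset ℝ)
    (hsym : P.map (fun x : ℝ => -x) = P) :
    distortion P (α.image (fun a => -a)) = distortion P α := by
  unfold distortion
  simp_rw [iInf_image_neg_aux α]
  calc ∫ x, ⨅ a : α, (x + (a : ℝ)) ^ 2 ∂P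
      = ∫ x, ⨅ a : α, (x + (a : ℝ)) ^ 2 ∂(P.map (fun y => -y)) := by rw [hsym]
    _ = ∫ y, ⨅ a : α, (-y + (a : ℝ)) ^ 2 ∂P := by
        rw [integral_map (by fun_prop) (meas_iInf_add α).aestronglyMeasurable]
    _ = ∫ y, ⨅ a : α, (y - (a : ℝ)) ^ 2 ∂P := by
        congr 1
        funext y
        exact iInf_congr fun a => by ring

/-- If the `n`-principal set of a symmetric measure is unique, then it is symmetric about 0. -/
theorem unique_principal_symmetric (P : Measure ℝ) [IsProbabilityMeasure P]
    (hmom : Integrable (fun x => x ^ 2) P)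
    (hsym : P.map (fun x : ℝ => -x) = P)
    (n : ℕ) (huniq : ∃! α : Finset ℝ, IsPrincipal P n α)
    (α : Finset ℝ) (hα : IsPrincipal P n α) :
    α.image (fun a => -a) = α := by
  obtain ⟨β, hβ, huniq⟩ := huniq
  have h1 : IsPrincipal P n (α.image (fun a => -a)) :=
    ⟨hα.1.image _, le_trans (Finset.card_image_le) hα.2.1,
      (distortion_image_neg P α hsym).trans hα.2.2⟩
  rw [huniq _ h1, huniq _ hα]
end

section
/- Let P be a continuous Borel probability measure on ℝ with finite second moment, symmetric about 0, with P({0}) = 0, and let Q = P(· | [0,∞)) be its one-tailed conditional version. Then for every k ∈ ℕ, the quantization errors satisfy V_{2k}(P) ≤ V_k(Q): for any set α of k points in (0,∞), the distortion error of α ∪ (-α) for P equals the distortion error of α for Q. -/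
open MeasureTheory

/- ### Auxiliary machinery -/

/-- The pointwise distortion function of a finite set, as a set infimum. -/
noncomputable def Faux (S : Finset ℝ) (x : ℝ) : ℝ := sInf ((fun b => (x - b) ^ 2) '' ↑S)

lemma Faux_nonneg (S : Finset ℝ) (x : ℝ) : 0 ≤ Faux S x :=
  Real.sInf_nonneg (by rintro y ⟨b, _, rfl⟩; positivity)

lemma Faux_le (S : Finset ℝ) {b : ℝ} (hb : b ∈ S) (x : ℝ) : Faux S x ≤ (x - b) ^ 2 :=
  csInf_le ((S.finite_toSet.image _).bddBelow) (Set.mem_image_of_mem _ hb)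

lemma Faux_mono {S T : Finset ℝ} (hST : S ⊆ T) (hS : S.Nonempty) (x : ℝ) :
    Faux T x ≤ Faux S x :=
  csInf_le_csInf ((T.finite_toSet.image _).bddBelow) (hS.to_set.image _)
    (Set.image_mono (by exact_mod_cast hST))

lemma Faux_continuous {S : Finset ℝ} (hS : S.Nonempty) : Continuous (Faux S) := by
  unfold Faux
  induction S using Finset.cons_induction with
  | empty => exact absurd hS (by simp)
  | cons a s ha ih =>
      rcases s.eq_empty_or_nonempty with rfl | hs
      · simpa using (show Continuous fun x : ℝ => (x - a) ^ 2 by fun_prop)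
      · have : (fun x : ℝ => sInf ((fun b => (x - b) ^ 2) '' ↑(Finset.cons a s ha))) =
            fun x : ℝ => ((x - a) ^ 2) ⊓ sInf ((fun b => (x - b) ^ 2) '' ↑s) := by
          funext x
          rw [Finset.cons_eq_insert, Finset.coe_insert, Set.image_insert_eq,
            csInf_insert ((s.finite_toSet.image _).bddBelow) (hs.to_set.image _)]
        rw [this]
        exact Continuous.min (by fun_prop) (ih hs)

lemma distortion_eq (P : Measure ℝ) (S : Finset ℝ) : distortion P S = ∫ x, Faux S x ∂P := by
  unfold distortion Faux
  congr 1
  funext x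
  rw [iInf]; congr 1; ext y; simp

lemma Faux_integrable (P : Measure ℝ) [IsProbabilityMeasure P]
    (hmom : Integrable (fun x => x ^ 2) P) {S : Finset ℝ} (hS : S.Nonempty) :
    Integrable (Faux S) P := by
  obtain ⟨b₀, hb₀⟩ := hS
  refine Integrable.mono' ((hmom.const_mul 2).add (integrable_const (2 * b₀ ^ 2)))
    (Faux_continuous ⟨b₀, hb₀⟩).aestronglyMeasurable (Filter.Eventually.of_forall fun x => ?_)
  rw [Real.norm_eq_abs, abs_of_nonneg (Faux_nonneg S x)]
  calc Faux S x ≤ (x - b₀) ^ 2 := Faux_le S hb₀ x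
    _ ≤ (fun x => 2 * x ^ 2) x + (fun _ => 2 * b₀ ^ 2) x := by
        simp only []; nlinarith [sq_nonneg (x + b₀)]

lemma neg_image_sym (β : Finset ℝ) :
    (fun b : ℝ => -b) '' ↑(β ∪ β.image (fun a => -a)) = ↑(β ∪ β.image (fun a => -a)) := by
  ext x
  constructor
  · rintro ⟨y, hy, rfl⟩
    simp only [Finset.coe_union, Finset.coe_image, Set.mem_union, Set.mem_image] at hy ⊢
    rcases hy with h | ⟨a, ha, rfl⟩
    · exact Or.inr ⟨y, h, rfl⟩
    · exact Or.inl (by simpa using ha)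
  · intro hx
    refine ⟨-x, ?_, by ring⟩
    simp only [Finset.coe_union, Finset.coe_image, Set.mem_union, Set.mem_image] at hx ⊢
    rcases hx with h | ⟨a, ha, rfl⟩
    · exact Or.inr ⟨x, h, rfl⟩
    · exact Or.inl (by simpa using ha)

lemma Faux_even (β : Finset ℝ) (x : ℝ) :
    Faux (β ∪ β.image (fun a => -a)) (-x) = Faux (β ∪ β.image (fun a => -a)) x := by
  unfold Faux
  have h1 : (fun b : ℝ => (-x - b) ^ 2) = (fun b : ℝ => (x - b) ^ 2) ∘ (fun b : ℝ => -b) :=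
    funext fun b => by simp only [Function.comp_apply]; ring
  rw [h1, Set.image_comp, neg_image_sym]

lemma Faux_on_Ici {β : Finset ℝ} (hβ : β.Nonempty) (hpos : ↑β ⊆ Set.Ioi (0:ℝ)) {x : ℝ}
    (hx : 0 ≤ x) : Faux (β ∪ β.image (fun a => -a)) x = Faux β x := by
  unfold Faux
  rw [Finset.coe_union, Set.image_union, csInf_union ((β.finite_toSet.image _).bddBelow)
    (hβ.to_set.image _) (((β.image _).finite_toSet.image _).bddBelow)
    ((hβ.image _).to_set.image _)]
  refine inf_eq_left.2 (le_csInf ((hβ.image _).to_set.image _) ?_)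
  rintro y ⟨b, hb, rfl⟩
  simp only [Finset.coe_image, Set.mem_image, Finset.mem_coe] at hb
  obtain ⟨a, ha, rfl⟩ := hb
  have ha' : 0 < a := hpos ha
  calc sInf ((fun b => (x - b) ^ 2) '' ↑β) ≤ (x - a) ^ 2 :=
        csInf_le ((β.finite_toSet.image _).bddBelow) (Set.mem_image_of_mem _ ha)
    _ ≤ (x - -a) ^ 2 := by nlinarith

lemma integral_neg_comp {P : Measure ℝ} (hsym : P.map (fun x : ℝ => -x) = P) {f : ℝ → ℝ}
    (hf : AEStronglyMeasurable f P) : ∫ x, f (-x) ∂P = ∫ x, f x ∂P := by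
  conv_rhs => rw [← hsym]
  rw [integral_map measurable_neg.aemeasurable (by rwa [hsym])]

lemma even_split {P : Measure ℝ} [IsProbabilityMeasure P]
    (hsym : P.map (fun x : ℝ => -x) = P) (h0 : ∀ x : ℝ, P {x} = 0)
    {f : ℝ → ℝ} (hint : Integrable f P) (heven : ∀ x, f (-x) = f x) :
    ∫ x, f x ∂P = 2 * ∫ x in Set.Ici (0:ℝ), f x ∂P := by
  have : NullSingletonClass P := ⟨h0⟩
  have hsplit : (∫ x in Set.Ici (0:ℝ), f x ∂P) + ∫ x in Set.Iio (0:ℝ), f x ∂P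
      = ∫ x, f x ∂P := by
    rw [show Set.Iio (0:ℝ) = (Set.Ici 0)ᶜ from (Set.compl_Ici).symm]
    exact integral_add_compl measurableSet_Ici hint
  have hneg : ∫ x in Set.Iio (0:ℝ), f x ∂P = ∫ x in Set.Ioi (0:ℝ), f x ∂P := by
    rw [← integral_indicator measurableSet_Iio, ← integral_indicator measurableSet_Ioi]
    rw [← integral_neg_comp hsym ((hint.aestronglyMeasurable).indicator measurableSet_Iio)]
    congr 1
    funext x
    simp only [Set.indicator_apply, Set.mem_Iio, Set.mem_Ioi]
    by_cases h : 0 < x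
    · rw [if_pos (by linarith), if_pos h, heven]
    · rw [if_neg (by linarith), if_neg h]
  rw [← hsplit, hneg, ← integral_Ici_eq_integral_Ioi, two_mul]

lemma half_measure {P : Measure ℝ} [IsProbabilityMeasure P]
    (hsym : P.map (fun x : ℝ => -x) = P) (h0 : P {0} = 0) :
    P (Set.Ici (0:ℝ)) = 1/2 := by
  have h1 : P (Set.Iic (0:ℝ)) = P (Set.Ici (0:ℝ)) := by
    conv_lhs => rw [← hsym]
    rw [Measure.map_apply measurable_neg measurableSet_Iic]
    congr 1
    ext x
    simp
  have h2 : P (Set.Ici (0:ℝ)) + P (Set.Iic (0:ℝ)) = 1 + P {0} := by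
    rw [← measure_union_add_inter _ measurableSet_Iic]
    have hu : Set.Ici (0:ℝ) ∪ Set.Iic 0 = Set.univ := by ext x; simp [le_total 0 x]
    have h3 : Set.Ici (0:ℝ) ∩ Set.Iic 0 = {0} := by ext x; simp [le_antisymm_iff, and_comm]
    rw [hu, h3, measure_univ]
  rw [h1, h0, add_zero, ← two_mul] at h2
  exact (ENNReal.eq_div_iff (by norm_num) (by norm_num)).mpr h2

/-- For a symmetric continuous measure `P` with one-tailed version `Q`, one has
`V_{2k}(P) ≤ V_k(Q)`, and symmetrized sets have for `P` the distortion that their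
positive half has for `Q`. -/
theorem quantErr_two_k_le (P : Measure ℝ) [IsProbabilityMeasure P]
    (hmom : Integrable (fun x => x ^ 2) P)
    (hcont : ∀ x : ℝ, P {x} = 0)
    (hsym : P.map (fun x : ℝ => -x) = P)
    (h0 : P {0} = 0)
    (Q : Measure ℝ) (hQ : Q = (P (Set.Ici (0 : ℝ)))⁻¹ • P.restrict (Set.Ici (0 : ℝ))) :
    ∀ k : ℕ, quantErr P (2 * k) ≤ quantErr Q k ∧
      ∀ α : Finset ℝ, α.card = k → (↑α : Set ℝ) ⊆ Set.Ioi (0 : ℝ) →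
        distortion P (α ∪ α.image (fun a => -a)) = distortion Q α := by
  have hhalf : P (Set.Ici (0:ℝ)) = 1/2 := half_measure hsym h0
  have hQint : ∀ β : Finset ℝ, distortion Q β = 2 * ∫ x in Set.Ici (0:ℝ), Faux β x ∂P := by
    intro β
    rw [distortion_eq, hQ, hhalf, integral_smul_measure]
    norm_num
  have hPdist : ∀ β : Finset ℝ, β.Nonempty →
      distortion P (β ∪ β.image (fun a => -a)) =
        2 * ∫ x in Set.Ici (0:ℝ), Faux (β ∪ β.image (fun a => -a)) x ∂P := by
    intro β hβ
    rw [distortion_eq]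
    exact even_split hsym hcont
      (Faux_integrable P hmom (hβ.mono Finset.subset_union_left)) (Faux_even β)
  intro k
  constructor
  · -- quantErr P (2k) ≤ quantErr Q k
    rcases Nat.eq_zero_or_pos k with rfl | hk
    · have hempty : ∀ (μ : Measure ℝ),
          {v | ∃ β : Finset ℝ, β.Nonempty ∧ β.card ≤ 0 ∧ v = distortion μ β} = ∅ := by
        intro μ
        ext v
        simp only [Set.mem_setOf_eq, Set.mem_empty_iff_false, iff_false, not_exists]
        rintro β ⟨hβ, hcard, -⟩
        exact absurd (Finset.card_eq_zero.mp (Nat.le_zero.mp hcard)) hβ.ne_empty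
      simp only [quantErr, Nat.mul_zero, hempty P, hempty Q, Real.sInf_empty, le_refl]
    · refine le_csInf ⟨distortion Q {0}, {0}, Finset.singleton_nonempty 0,
        by simpa using Nat.succ_le_of_lt hk, rfl⟩ ?_
      rintro v ⟨β, hβ, hcard, rfl⟩
      have hsub : β ⊆ β ∪ β.image (fun a => -a) := Finset.subset_union_left
      have bdd : BddBelow {v | ∃ γ : Finset ℝ, γ.Nonempty ∧ γ.card ≤ 2 * k ∧
          v = distortion P γ} := by
        refine ⟨0, ?_⟩
        rintro v ⟨γ, -, -, rfl⟩
        rw [distortion_eq]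
        exact integral_nonneg fun x => Faux_nonneg γ x
      have hmem : distortion P (β ∪ β.image (fun a => -a)) ∈
          {v | ∃ γ : Finset ℝ, γ.Nonempty ∧ γ.card ≤ 2 * k ∧ v = distortion P γ} := by
        refine ⟨_, hβ.mono hsub, ?_, rfl⟩
        have h1 := Finset.card_union_le β (β.image (fun a => -a))
        have h2 := Finset.card_image_le (s := β) (f := fun a => -a)
        omega
      refine le_trans (csInf_le bdd hmem) ?_
      rw [hPdist β hβ, hQint β]
      refine mul_le_mul_of_nonneg_left ?_ (by norm_num)
      exact integral_mono ((Faux_integrable P hmom (hβ.mono hsub)).restrict)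
        ((Faux_integrable P hmom hβ).restrict) (fun x => Faux_mono hsub hβ x)
  · intro α hcard hpos
    rcases α.eq_empty_or_nonempty with rfl | hα
    · simp [distortion_eq, Faux]
    · rw [hPdist α hα, hQint α]
      congr 1
      exact setIntegral_congr_fun measurableSet_Ici (fun x hx => Faux_on_Ici hα hpos hx)
end

section
/- Let P be a probability measure on ℝ with density f and finite second moment, and let α = {a₁ < ⋯ < aₙ} be an n-principal set for P with each Voronoi region having positive P-measure. Then α is self-consistent: for each i, a_i = (∫_{m_{i-1}}^{m_i} x f(x) dx) / (∫_{m_{i-1}}^{m_i} f(x) dx), where m₀ = -∞, mₙ = ∞, and m_i = (a_i+a_{i+1})/2. -/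
open MeasureTheory
open scoped NNReal ENNReal

section Aux

lemma iInf_eq_inf' (β : Finset ℝ) (hβ : β.Nonempty) (g : ℝ → ℝ) :
    (⨅ b : β, g b) = β.inf' hβ g := by
  rw [Finset.inf'_eq_csInf_image, iInf]
  congr 1
  ext y
  constructor
  · rintro ⟨⟨b, hb⟩, rfl⟩; exact ⟨b, hb, rfl⟩
  · rintro ⟨b, hb, rfl⟩; exact ⟨⟨b, hb⟩, rfl⟩

lemma cont_iInf (β : Finset ℝ) (hβ : β.Nonempty) :
    Continuous (fun x : ℝ => ⨅ b : β, (x - (b : ℝ)) ^ 2) := by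
  have h : ∀ x : ℝ, (⨅ b : β, (x - (b : ℝ)) ^ 2) =
      β.inf' hβ (fun b => (x - b) ^ 2) := fun x => iInf_eq_inf' β hβ (fun b => (x - b) ^ 2)
  simp_rw [h]
  rw [continuous_iff_continuousAt]
  intro x
  exact ContinuousAt.finset_inf'_apply hβ (fun b _ => by fun_prop)

lemma iInf_le_sq (β : Finset ℝ) {b : ℝ} (hb : b ∈ β) (x : ℝ) :
    (⨅ c : β, (x - (c : ℝ)) ^ 2) ≤ (x - b) ^ 2 := by
  apply ciInf_le _ (⟨b, hb⟩ : β)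
  exact ⟨0, by rintro y ⟨c, rfl⟩; positivity⟩

lemma iInf_sq_nonneg (β : Finset ℝ) (x : ℝ) :
    0 ≤ ⨅ c : β, (x - (c : ℝ)) ^ 2 :=
  Real.iInf_nonneg (fun c => by positivity)

lemma measJ (p q : Prop) (c d : ℝ) :
    MeasurableSet {x : ℝ | (p → c < x) ∧ (q → x ≤ d)} := by
  have h : {x : ℝ | (p → c < x) ∧ (q → x ≤ d)} =
      {x : ℝ | p → c < x} ∩ {x : ℝ | q → x ≤ d} := rfl
  rw [h]
  apply MeasurableSet.inter
  · by_cases hp : p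
    · simp only [hp, true_implies]; exact measurableSet_Ioi
    · simp only [hp, false_implies]; exact MeasurableSet.univ.congr (by ext x; simp)
  · by_cases hq : q
    · simp only [hq, true_implies]; exact measurableSet_Iic
    · simp only [hq, false_implies]; exact MeasurableSet.univ.congr (by ext x; simp)

lemma setIntegral_density (f : ℝ → ℝ) (hf0 : ∀ x, 0 ≤ f x) (hfm : AEMeasurable f volume)
    {s : Set ℝ} (hs : MeasurableSet s) (g : ℝ → ℝ) :
    ∫ x in s, g x ∂(volume.withDensity (fun x => ENNReal.ofReal (f x))) =
      ∫ x in s, g x * f x := by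
  have h1 : (fun x : ℝ => ENNReal.ofReal (f x)) =
      fun x => ((Real.toNNReal (f x) : ℝ≥0) : ℝ≥0∞) := rfl
  rw [h1, setIntegral_withDensity_eq_setIntegral_smul₀ (f := fun x => (f x).toNNReal)
    (measurable_real_toNNReal.comp_aemeasurable hfm.restrict) g hs]
  apply setIntegral_congr_fun hs
  intro x _
  simp [NNReal.smul_def, Real.coe_toNNReal _ (hf0 x), mul_comm]

lemma huygens (f : ℝ → ℝ) (s : Set ℝ)
    (h2 : IntegrableOn (fun x => x ^ 2 * f x) s)
    (h1 : IntegrableOn (fun x => x * f x) s)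
    (h0 : IntegrableOn f s)
    (hM : 0 < ∫ x in s, f x) (t c : ℝ)
    (hc : c = (∫ x in s, x * f x) / (∫ x in s, f x))
    (ht : t ≠ c) :
    ∫ x in s, (x - c) ^ 2 * f x < ∫ x in s, (x - t) ^ 2 * f x := by
  set M := ∫ x in s, f x with hMdef
  set S := ∫ x in s, x * f x with hSdef
  have key : ∀ u : ℝ, ∫ x in s, (x - u) ^ 2 * f x
      = (∫ x in s, x ^ 2 * f x) - 2 * u * S + u ^ 2 * M := by
    intro u
    have he : ∀ x : ℝ, (x - u) ^ 2 * f x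
        = x ^ 2 * f x - 2 * u * (x * f x) + u ^ 2 * f x := by intro x; ring
    simp_rw [he]
    have i1 : IntegrableOn (fun x => x ^ 2 * f x - 2 * u * (x * f x)) s :=
      h2.sub (h1.const_mul _)
    have i2 : IntegrableOn (fun x => u ^ 2 * f x) s := h0.const_mul _
    rw [integral_add i1 i2, integral_sub h2 (h1.const_mul _),
        integral_const_mul, integral_const_mul]
  have hS : S = c * M := by rw [hc]; field_simp
  rw [key c, key t]
  have hd : ((∫ x in s, x ^ 2 * f x) - 2 * t * S + t ^ 2 * M)
      - ((∫ x in s, x ^ 2 * f x) - 2 * c * S + c ^ 2 * M) = M * (t - c) ^ 2 := by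
    rw [hS]; ring
  have hpos : 0 < M * (t - c) ^ 2 :=
    mul_pos hM (by have h := sub_ne_zero.mpr ht; positivity)
  linarith

end Aux

/-- An `n`-principal set whose Voronoi regions have positive measure is self-consistent:
each point is the conditional mean of its Voronoi interval. -/
theorem principal_self_consistent (f : ℝ → ℝ) (hf0 : ∀ x, 0 ≤ f x)
    (hf1 : ∫ x, f x = 1) (hmom : Integrable (fun x => x ^ 2 * f x))
    (P : Measure ℝ) (hP : P = volume.withDensity (fun x => ENNReal.ofReal (f x)))
    (n : ℕ) (hn : 1 ≤ n) (a : ℕ → ℝ)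
    (ha : ∀ i j, 1 ≤ i → i < j → j ≤ n → a i < a j)
    (m : ℕ → ℝ) (hm : ∀ i, m i = (a i + a (i + 1)) / 2)
    (hprin : IsPrincipal P n ((Finset.Icc 1 n).image a))
    (hpos : ∀ i ∈ Finset.Icc 1 n,
      0 < ∫ x in {x : ℝ | (1 < i → m (i - 1) ≤ x) ∧ (i < n → x ≤ m i)}, f x) :
    ∀ i ∈ Finset.Icc 1 n,
      a i = (∫ x in {x : ℝ | (1 < i → m (i - 1) ≤ x) ∧ (i < n → x ≤ m i)}, x * f x) /
            (∫ x in {x : ℝ | (1 < i → m (i - 1) ≤ x) ∧ (i < n → x ≤ m i)}, f x) := by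
  classical
  -- basic integrability
  have hfint : Integrable f := by
    by_contra h
    rw [integral_undef h] at hf1; exact one_ne_zero hf1.symm
  have hfm : AEMeasurable f volume := hfint.aemeasurable
  have hxf : Integrable (fun x => x * f x) := by
    refine Integrable.mono' (hmom.add hfint) (aestronglyMeasurable_id.mul hfint.1) ?_
    filter_upwards with x
    have h1 : ‖x * f x‖ = |x| * f x := by
      rw [Real.norm_eq_abs, abs_mul, abs_of_nonneg (hf0 x)]
    have h2 : |x| ≤ x ^ 2 + 1 := by nlinarith [sq_nonneg (|x| - 1), sq_abs x]
    rw [h1]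
    calc |x| * f x ≤ (x ^ 2 + 1) * f x := mul_le_mul_of_nonneg_right h2 (hf0 x)
    _ = x ^ 2 * f x + f x := by ring
  have hq : ∀ b : ℝ, Integrable (fun x => (x - b) ^ 2 * f x) := by
    intro b
    have he : (fun x : ℝ => (x - b) ^ 2 * f x)
        = fun x => x ^ 2 * f x - (2 * b) * (x * f x) + b ^ 2 * f x := by funext x; ring
    rw [he]
    exact ((hmom.sub (hxf.const_mul _))).add (hfint.const_mul _)
  -- Voronoi half-open regions
  set J : ℕ → Set ℝ := fun i => {x | (1 < i → m (i - 1) < x) ∧ (i < n → x ≤ m i)} with hJ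
  have hJmeas : ∀ i, MeasurableSet (J i) := fun i => measJ _ _ _ _
  -- order facts
  have hmono : ∀ i j, 1 ≤ i → i ≤ j → j ≤ n → a i ≤ a j := by
    intro i j h1 h2 h3
    rcases eq_or_lt_of_le h2 with rfl | h
    · exact le_refl _
    · exact (ha i j h1 h h3).le
  have hmm : ∀ i j, 1 ≤ i → i ≤ j → j + 1 ≤ n → m i ≤ m j := by
    intro i j h1 h2 h3
    rw [hm, hm]
    have t1 := hmono i j h1 h2 (by omega)
    have t2 := hmono (i + 1) (j + 1) (by omega) (by omega) h3
    linarith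
  -- nearest point property (closed bounds)
  have hnear : ∀ i ∈ Finset.Icc 1 n, ∀ j ∈ Finset.Icc 1 n, ∀ x : ℝ,
      (1 < i → m (i - 1) ≤ x) → (i < n → x ≤ m i) → (x - a i) ^ 2 ≤ (x - a j) ^ 2 := by
    intro i hi j hj x hL hR
    simp only [Finset.mem_Icc] at hi hj
    rcases lt_trichotomy i j with hij | rfl | hij
    · have hxm : x ≤ m i := hR (by omega)
      have ht1 : a (i + 1) ≤ a j := hmono (i + 1) j (by omega) (by omega) hj.2
      have hai : a i ≤ a j := hmono i j hi.1 (by omega) hj.2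
      have h2x : 2 * x ≤ a i + a j := by rw [hm] at hxm; linarith
      nlinarith [mul_nonneg (sub_nonneg.2 hai)
        (by linarith : (0:ℝ) ≤ a i + a j - 2 * x)]
    · exact le_refl _
    · have hxm : m (i - 1) ≤ x := hL (by omega)
      have hpred : i - 1 + 1 = i := by omega
      have hmv : m (i - 1) = (a (i - 1) + a i) / 2 := by rw [hm, hpred]
      have ht1 : a j ≤ a (i - 1) := hmono j (i - 1) hj.1 (by omega) (by omega)
      have hai : a j ≤ a i := hmono j i hj.1 (by omega) hi.2
      have h2x : a j + a i ≤ 2 * x := by rw [hmv] at hxm; linarith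
      nlinarith [mul_nonneg (sub_nonneg.2 hai)
        (by linarith : (0:ℝ) ≤ 2 * x - a j - a i)]
  -- pairwise disjoint
  have hdisj : Set.Pairwise (↑(Finset.Icc 1 n)) (Function.onFun Disjoint J) := by
    have key : ∀ i j, 1 ≤ i → i < j → j ≤ n → Disjoint (J i) (J j) := by
      intro i j h1 h2 h3
      rw [Set.disjoint_left]
      rintro x ⟨_, hxR⟩ ⟨hxL, _⟩
      have hxm : x ≤ m i := hxR (by omega)
      have hxm' : m (j - 1) < x := hxL (by omega)
      have hle : m i ≤ m (j - 1) := hmm i (j - 1) h1 (by omega) (by omega)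
      linarith
    intro i hi j hj hij
    simp only [Finset.coe_Icc, Set.mem_Icc] at hi hj
    rcases lt_or_gt_of_ne hij with h | h
    · exact key i j hi.1 h hj.2
    · exact (key j i hj.1 h hi.2).symm
  -- covering
  have hcover : (⋃ i ∈ Finset.Icc 1 n, J i) = Set.univ := by
    ext x
    simp only [Set.mem_iUnion, Set.mem_univ, iff_true]
    have hex : ∃ i, 1 ≤ i ∧ i ≤ n ∧ (i < n → x ≤ m i) :=
      ⟨n, hn, le_refl n, fun h => absurd h (lt_irrefl n)⟩
    obtain ⟨h1, h2, h3⟩ := Nat.find_spec hex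
    refine ⟨Nat.find hex, Finset.mem_Icc.2 ⟨h1, h2⟩, ?_, h3⟩
    intro hgt
    by_contra hcon
    push_neg at hcon
    exact Nat.find_min hex (show Nat.find hex - 1 < Nat.find hex by omega)
      ⟨by omega, by omega, fun _ => hcon⟩
  -- density translation
  have hPint : ∀ (s : Set ℝ), MeasurableSet s → ∀ g : ℝ → ℝ,
      ∫ x in s, g x ∂P = ∫ x in s, g x * f x := by
    intro s hs g; rw [hP]; exact setIntegral_density f hf0 hfm hs g
  have hPall : ∀ g : ℝ → ℝ, ∫ x, g x ∂P = ∫ x, g x * f x := by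
    intro g
    have h := hPint Set.univ MeasurableSet.univ g
    simpa [setIntegral_univ] using h
  have hD : ∀ β : Finset ℝ,
      distortion P β = ∫ x, (⨅ b : β, (x - (b : ℝ)) ^ 2) * f x := by
    intro β; unfold distortion; exact hPall _
  -- integrability of the distortion integrand
  have hFint : ∀ (β : Finset ℝ), β.Nonempty →
      Integrable (fun x => (⨅ b : β, (x - (b : ℝ)) ^ 2) * f x) := by
    intro β hβ
    obtain ⟨b0, hb0⟩ := hβ
    refine Integrable.mono' (hq b0)
      (((cont_iInf β ⟨b0, hb0⟩).aestronglyMeasurable).mul hfint.1) ?_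
    filter_upwards with x
    rw [Real.norm_eq_abs,
      abs_of_nonneg (mul_nonneg (iInf_sq_nonneg β x) (hf0 x))]
    exact mul_le_mul_of_nonneg_right (iInf_le_sq β hb0 x) (hf0 x)
  -- splitting the distortion along the Voronoi regions
  have hsplit : ∀ (β : Finset ℝ), β.Nonempty →
      distortion P β
        = ∑ i ∈ Finset.Icc 1 n, ∫ x in J i, (⨅ b : β, (x - (b : ℝ)) ^ 2) * f x := by
    intro β hβ
    rw [hD β, ← setIntegral_univ, ← hcover,
      integral_biUnion_finset _ (fun i _ => hJmeas i) hdisj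
        (fun i _ => (hFint β hβ).integrableOn)]
  -- the principal set
  set A := (Finset.Icc 1 n).image a with hA
  have hAne : A.Nonempty :=
    ⟨a 1, Finset.mem_image_of_mem a (Finset.mem_Icc.2 ⟨le_refl 1, hn⟩)⟩
  have hAeq : ∀ i ∈ Finset.Icc 1 n,
      ∫ x in J i, (⨅ b : A, (x - (b : ℝ)) ^ 2) * f x
        = ∫ x in J i, (x - a i) ^ 2 * f x := by
    intro i hi
    apply setIntegral_congr_fun (hJmeas i)
    intro x hx
    obtain ⟨hxL, hxR⟩ := hx
    obtain ⟨a0, ha0⟩ := hAne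
    haveI : Nonempty {y // y ∈ A} := ⟨⟨a0, ha0⟩⟩
    have hkey : (⨅ b : A, (x - (b : ℝ)) ^ 2) = (x - a i) ^ 2 := by
      apply le_antisymm
      · exact iInf_le_sq A (Finset.mem_image_of_mem a hi) x
      · apply le_ciInf
        rintro ⟨b, hb⟩
        obtain ⟨j, hj, rfl⟩ := Finset.mem_image.1 hb
        exact hnear i hi j hj x (fun h => (hxL h).le) hxR
    show (⨅ b : A, (x - (b : ℝ)) ^ 2) * f x = (x - a i) ^ 2 * f x
    rw [hkey]
  -- main argument
  intro i hi
  by_contra hne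
  have hIJ : ∀ g : ℝ → ℝ,
      ∫ x in {x : ℝ | (1 < i → m (i - 1) ≤ x) ∧ (i < n → x ≤ m i)}, g x
        = ∫ x in J i, g x := by
    intro g
    apply setIntegral_congr_set
    rw [ae_eq_set]
    constructor
    · refine measure_mono_null ?_ (measure_singleton (m (i - 1)))
      rintro x ⟨⟨hxL, hxR⟩, hnotJ⟩
      have hc : ¬(1 < i → m (i - 1) < x) := fun h => hnotJ ⟨h, hxR⟩
      push_neg at hc
      exact Set.mem_singleton_iff.2 (le_antisymm hc.2 (hxL hc.1))
    · refine measure_mono_null ?_ (measure_empty (μ := volume))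
      rintro x ⟨⟨hxL, hxR⟩, hnotI⟩
      exact absurd ⟨fun h => (hxL h).le, hxR⟩ hnotI
  set M := ∫ x in J i, f x with hMdef
  set S := ∫ x in J i, x * f x with hSdef
  set c := S / M with hcdef
  have hM : 0 < M := by rw [hMdef, ← hIJ f]; exact hpos i hi
  have hne' : a i ≠ c := by
    rw [hIJ (fun x => x * f x), hIJ f] at hne
    exact hne
  -- the competing set
  set B := insert c (A.erase (a i)) with hB
  have hBne : B.Nonempty := ⟨c, Finset.mem_insert_self _ _⟩
  have hcB : c ∈ B := Finset.mem_insert_self _ _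
  have hcard : B.card ≤ n := by
    calc B.card ≤ (A.erase (a i)).card + 1 := Finset.card_insert_le _ _
    _ = A.card - 1 + 1 := by
        rw [Finset.card_erase_of_mem (Finset.mem_image_of_mem a hi)]
    _ = A.card := Nat.sub_add_cancel (Finset.card_pos.2 hAne)
    _ ≤ n := hprin.2.1
  have hiIcc := Finset.mem_Icc.1 hi
  have hajB : ∀ j ∈ Finset.Icc 1 n, j ≠ i → a j ∈ B := by
    intro j hj hji
    have hjIcc := Finset.mem_Icc.1 hj
    have hne2 : a j ≠ a i := by
      rcases lt_or_gt_of_ne hji with h | h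
      · exact ne_of_lt (ha j i hjIcc.1 h hiIcc.2)
      · exact ne_of_gt (ha i j hiIcc.1 h hjIcc.2)
    exact Finset.mem_insert_of_mem
      (Finset.mem_erase.2 ⟨hne2, Finset.mem_image_of_mem a hj⟩)
  -- piecewise comparisons
  have hBle : ∀ b ∈ B, ∀ s : Set ℝ, MeasurableSet s →
      ∫ x in s, (⨅ b' : B, (x - (b' : ℝ)) ^ 2) * f x ≤ ∫ x in s, (x - b) ^ 2 * f x := by
    intro b hb s hs
    apply setIntegral_mono_on ((hFint B hBne).integrableOn) ((hq b).integrableOn) hs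
    intro x _
    exact mul_le_mul_of_nonneg_right (iInf_le_sq B hb x) (hf0 x)
  have hlt : ∫ x in J i, (⨅ b : B, (x - (b : ℝ)) ^ 2) * f x
      < ∫ x in J i, (x - a i) ^ 2 * f x := by
    calc ∫ x in J i, (⨅ b : B, (x - (b : ℝ)) ^ 2) * f x
        ≤ ∫ x in J i, (x - c) ^ 2 * f x := hBle c hcB (J i) (hJmeas i)
    _ < ∫ x in J i, (x - a i) ^ 2 * f x :=
        huygens f (J i) hmom.integrableOn hxf.integrableOn hfint.integrableOn hM
          (a i) c hcdef hne'
  have hsum : ∑ j ∈ Finset.Icc 1 n, ∫ x in J j, (⨅ b : B, (x - (b : ℝ)) ^ 2) * f x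
      < ∑ j ∈ Finset.Icc 1 n, ∫ x in J j, (x - a j) ^ 2 * f x := by
    apply Finset.sum_lt_sum
    · intro j hj
      by_cases hji : j = i
      · subst hji; exact hlt.le
      · exact hBle (a j) (hajB j hj hji) (J j) (hJmeas j)
    · exact ⟨i, hi, hlt⟩
  have hDA : distortion P A = ∑ j ∈ Finset.Icc 1 n, ∫ x in J j, (x - a j) ^ 2 * f x := by
    rw [hsplit A hAne]; exact Finset.sum_congr rfl hAeq
  have hDBlt : distortion P B < distortion P A := by
    rw [hsplit B hBne, hDA]; exact hsum
  have hbdd : BddBelow {v | ∃ β : Finset ℝ, β.Nonempty ∧ β.card ≤ n ∧ v = distortion P β} := by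
    refine ⟨0, ?_⟩
    rintro v ⟨β, hβ, -, rfl⟩
    exact integral_nonneg (fun x => iInf_sq_nonneg β x)
  have hqle : quantErr P n ≤ distortion P B := by
    unfold quantErr; exact csInf_le hbdd ⟨B, hBne, hcard, rfl⟩
  have heq := hprin.2.2
  linarith
end

section
/- Let f : ℝ → ℝ be a continuous probability density and define g : ℝⁿ → ℝⁿ on the open set {a₁ < a₂ < ⋯ < aₙ} by g_j(α) = a_j ∫_{m_{j-1}}^{m_j} f(x) dx − ∫_{m_{j-1}}^{m_j} x f(x) dx, with m₀ = -∞, mₙ = ∞, m_j = (a_j+a_{j+1})/2. Then g is differentiable and its Jacobian matrix J is symmetric tridiagonal, with off-diagonal entries J_{j,j+1} = J_{j+1,j} = −f(m_j)·(a_{j+1}−a_j)/4 for 1 ≤ j ≤ n−1. -/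
open MeasureTheory

/-- The Voronoi interval of the `j`-th point of `v : Fin n → ℝ` (for sorted `v`):
`(m_{j-1}, m_j]` with midpoints `m_j = (v j + v (j+1))/2`, `m₀ = -∞`, `mₙ = ∞`. -/
def voronoiCell (n : ℕ) (v : Fin n → ℝ) (j : Fin n) : Set ℝ :=
  {x | (∀ j' : Fin n, (j' : ℕ) + 1 = (j : ℕ) → (v j' + v j) / 2 < x) ∧
       (∀ j' : Fin n, (j : ℕ) + 1 = (j' : ℕ) → x ≤ (v j + v j') / 2)}

/-- The nonlinear map `g` whose roots are the self-consistent sets: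
`g_j(v) = v_j ∫_{m_{j-1}}^{m_j} f − ∫_{m_{j-1}}^{m_j} x f`. -/
noncomputable def gfun (n : ℕ) (f : ℝ → ℝ) (v : Fin n → ℝ) (j : Fin n) : ℝ :=
  v j * (∫ x in voronoiCell n v j, f x) - ∫ x in voronoiCell n v j, x * f x

lemma hasDerivAt_integral_Iic (h : ℝ → ℝ) (hi : Integrable h) (hc : Continuous h) (t : ℝ) :
    HasDerivAt (fun s => ∫ x in Set.Iic s, h x) (h t) t := by
  have he : (fun s => ∫ x in Set.Iic s, h x)
      = fun s => (∫ x in Set.Iic t, h x) + ∫ x in t..s, h x := by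
    funext s
    rw [← intervalIntegral.integral_Iic_sub_Iic hi.integrableOn hi.integrableOn]
    ring
  rw [he]
  exact ((intervalIntegral.integral_hasDerivAt_right hi.intervalIntegrable
    (hc.stronglyMeasurableAtFilter _ _) hc.continuousAt).const_add _)

lemma voronoiCell_interior {n : ℕ} (w : Fin n → ℝ) (p j s : Fin n)
    (hpj : (p:ℕ)+1 = (j:ℕ)) (hjs : (j:ℕ)+1 = (s:ℕ)) :
    voronoiCell n w j = Set.Ioc ((w p + w j)/2) ((w j + w s)/2) := by
  ext x
  constructor
  · rintro ⟨h1, h2⟩; exact ⟨h1 p hpj, h2 s hjs⟩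
  · rintro ⟨h1, h2⟩
    refine ⟨fun j' hj' => ?_, fun j' hj' => ?_⟩
    · have : j' = p := Fin.ext (by omega); rwa [this]
    · have : j' = s := Fin.ext (by omega); rwa [this]

lemma voronoiCell_first {n : ℕ} (w : Fin n → ℝ) (j s : Fin n)
    (hj0 : (j:ℕ) = 0) (hjs : (j:ℕ)+1 = (s:ℕ)) :
    voronoiCell n w j = Set.Iic ((w j + w s)/2) := by
  ext x
  constructor
  · rintro ⟨_, h2⟩; exact h2 s hjs
  · intro h
    refine ⟨fun j' hj' => by omega, fun j' hj' => ?_⟩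
    have : j' = s := Fin.ext (by omega); rwa [this]

lemma voronoiCell_last {n : ℕ} (w : Fin n → ℝ) (p j : Fin n)
    (hpj : (p:ℕ)+1 = (j:ℕ)) (hjn : (j:ℕ)+1 = n) :
    voronoiCell n w j = Set.Ioi ((w p + w j)/2) := by
  ext x
  constructor
  · rintro ⟨h1, _⟩; exact h1 p hpj
  · intro h
    refine ⟨fun j' hj' => ?_, fun j' hj' => ?_⟩
    · have : j' = p := Fin.ext (by omega); rwa [this]
    · exact absurd hj' (by have := j'.isLt; omega)

lemma voronoiCell_univ {n : ℕ} (w : Fin n → ℝ) (j : Fin n)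
    (hj0 : (j:ℕ) = 0) (hjn : (j:ℕ)+1 = n) :
    voronoiCell n w j = Set.univ := by
  ext x
  simp only [voronoiCell, Set.mem_setOf_eq, Set.mem_univ, iff_true]
  exact ⟨fun j' hj' => by omega, fun j' hj' => by have := j'.isLt; omega⟩

set_option maxHeartbeats 2000000 in
lemma gfun_key {n : ℕ} {f : ℝ → ℝ} (hf : Continuous f) (hfi : Integrable f)
    (hmom : Integrable (fun x => x * f x)) (v : Fin n → ℝ) (hv : StrictMono v) (j : Fin n) :
    ∃ D : (Fin n → ℝ) →L[ℝ] ℝ, HasFDerivAt (fun w => gfun n f w j) D v ∧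
      (∀ k : Fin n, (k:ℕ)+1 = (j:ℕ) → D (Pi.single k 1) = -f ((v k + v j)/2) * (v j - v k)/4) ∧
      (∀ k : Fin n, (j:ℕ)+1 = (k:ℕ) → D (Pi.single k 1) = -f ((v j + v k)/2) * (v k - v j)/4) ∧
      (∀ k : Fin n, k ≠ j → (k:ℕ)+1 ≠ (j:ℕ) → (j:ℕ)+1 ≠ (k:ℕ) → D (Pi.single k 1) = 0) := by
  classical
  set Φ : ℝ → ℝ := fun t => ∫ x in Set.Iic t, f x with hΦdef
  set Ψ : ℝ → ℝ := fun t => ∫ x in Set.Iic t, x * f x with hΨdef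
  have hmomc : Continuous (fun x => x * f x) := continuous_id.mul hf
  have hjproj : HasFDerivAt (fun w : Fin n → ℝ => w j)
      (ContinuousLinearMap.proj j : (Fin n → ℝ) →L[ℝ] ℝ) v := hasFDerivAt_apply j v
  by_cases hj0 : (j:ℕ) = 0 <;> by_cases hjn : (j:ℕ)+1 = n
  · -- n = 1 : cell is univ
    have hgf : (fun w => gfun n f w j)
        = fun w => w j * (∫ x, f x) - ∫ x, x * f x := by
      funext w
      rw [gfun, voronoiCell_univ w j hj0 hjn]
      simp
    have hmain : HasFDerivAt (fun w => gfun n f w j)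
        (((∫ x, f x) • (ContinuousLinearMap.proj j : (Fin n → ℝ) →L[ℝ] ℝ))) v := by
      rw [hgf]
      simpa using (hjproj.mul_const (∫ x, f x)).sub_const (∫ x, x * f x)
    refine ⟨_, hmain, ?_, ?_, ?_⟩
    · intro k hk; omega
    · intro k hk; have := k.isLt; omega
    · intro k hk1 _ _
      have : k = j := Fin.ext (by have := k.isLt; omega)
      exact absurd this hk1
  · -- j = 0, n ≥ 2 : cell is Iic
    set s : Fin n := ⟨(j:ℕ)+1, by have := j.isLt; omega⟩ with hsdef
    have hjs : (j:ℕ)+1 = (s:ℕ) := rfl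
    set LB : (Fin n → ℝ) →L[ℝ] ℝ := (2⁻¹ : ℝ) •
      ((ContinuousLinearMap.proj j : (Fin n → ℝ) →L[ℝ] ℝ)
        + (ContinuousLinearMap.proj s : (Fin n → ℝ) →L[ℝ] ℝ)) with hLB
    have hBfun : HasFDerivAt (fun w : Fin n → ℝ => (w j + w s)/2) LB v := by
      have : (fun w : Fin n → ℝ => (w j + w s)/2) = fun w => LB w := by
        funext w
        simp [hLB, ContinuousLinearMap.proj]
        ring
      rw [this]
      exact LB.hasFDerivAt
    have hgf : (fun w => gfun n f w j)
        = fun w => w j * Φ ((w j + w s)/2) - Ψ ((w j + w s)/2) := by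
      funext w
      rw [gfun, voronoiCell_first w j s hj0 hjs]
    have hΦB : HasFDerivAt (fun w : Fin n → ℝ => Φ ((w j + w s)/2))
        (f ((v j + v s)/2) • LB) v := by
      have := (hasDerivAt_integral_Iic f hfi hf ((v j + v s)/2)).comp_hasFDerivAt v hBfun
      simpa [Function.comp_def] using this
    have hΨB : HasFDerivAt (fun w : Fin n → ℝ => Ψ ((w j + w s)/2))
        ((((v j + v s)/2) * f ((v j + v s)/2)) • LB) v := by
      have := (hasDerivAt_integral_Iic _ hmom hmomc ((v j + v s)/2)).comp_hasFDerivAt v hBfun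
      simpa [Function.comp_def] using this
    have hmain := (hjproj.mul hΦB).sub hΨB
    change HasFDerivAt (fun w => w j * Φ ((w j + w s)/2) - Ψ ((w j + w s)/2)) _ v at hmain
    rw [← hgf] at hmain
    refine ⟨_, hmain, ?_, ?_, ?_⟩
    · intro k hk; omega
    · intro k hk
      have hks : k = s := Fin.ext (by omega)
      have hjne : j ≠ s := fun h => by rw [h] at hjs; omega
      subst hks
      simp [hLB, Pi.single_apply, hjne, if_neg]
      ring
    · intro k hk1 hk2 hk3
      have h1 : j ≠ k := fun h => hk1 h.symm
      have h2 : s ≠ k := fun h => hk3 (h ▸ hjs)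
      simp [hLB, Pi.single_apply, h1.symm, h2.symm]
  · -- j = n-1, j ≥ 1 : cell is Ioi
    set p : Fin n := ⟨(j:ℕ)-1, by have := j.isLt; omega⟩ with hpdef
    have hpj : (p:ℕ)+1 = (j:ℕ) := by
      have h' : (p:ℕ) = (j:ℕ)-1 := rfl
      omega
    set LA : (Fin n → ℝ) →L[ℝ] ℝ := (2⁻¹ : ℝ) •
      ((ContinuousLinearMap.proj p : (Fin n → ℝ) →L[ℝ] ℝ)
        + (ContinuousLinearMap.proj j : (Fin n → ℝ) →L[ℝ] ℝ)) with hLA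
    have hAfun : HasFDerivAt (fun w : Fin n → ℝ => (w p + w j)/2) LA v := by
      have : (fun w : Fin n → ℝ => (w p + w j)/2) = fun w => LA w := by
        funext w
        simp [hLA, ContinuousLinearMap.proj]
        ring
      rw [this]
      exact LA.hasFDerivAt
    have hgf : (fun w => gfun n f w j)
        = fun w => w j * ((∫ x, f x) - Φ ((w p + w j)/2))
            - ((∫ x, x * f x) - Ψ ((w p + w j)/2)) := by
      funext w
      rw [gfun, voronoiCell_last w p j hpj hjn]
      have e1 : ∫ x in Set.Ioi ((w p + w j)/2), f x
          = (∫ x, f x) - Φ ((w p + w j)/2) := by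
        rw [← intervalIntegral.integral_Iic_add_Ioi hfi.integrableOn hfi.integrableOn]
        ring
      have e2 : ∫ x in Set.Ioi ((w p + w j)/2), x * f x
          = (∫ x, x * f x) - Ψ ((w p + w j)/2) := by
        rw [← intervalIntegral.integral_Iic_add_Ioi hmom.integrableOn hmom.integrableOn]
        ring
      rw [e1, e2]
    have hΦA : HasFDerivAt (fun w : Fin n → ℝ => Φ ((w p + w j)/2))
        (f ((v p + v j)/2) • LA) v := by
      have := (hasDerivAt_integral_Iic f hfi hf ((v p + v j)/2)).comp_hasFDerivAt v hAfun
      simpa [Function.comp_def] using this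
    have hΨA : HasFDerivAt (fun w : Fin n → ℝ => Ψ ((w p + w j)/2))
        ((((v p + v j)/2) * f ((v p + v j)/2)) • LA) v := by
      have := (hasDerivAt_integral_Iic _ hmom hmomc ((v p + v j)/2)).comp_hasFDerivAt v hAfun
      simpa [Function.comp_def] using this
    have hmain := (hjproj.mul ((hasFDerivAt_const (∫ x, f x) v).sub hΦA)).sub
      ((hasFDerivAt_const (∫ x, x * f x) v).sub hΨA)
    change HasFDerivAt (fun w => w j * ((∫ x, f x) - Φ ((w p + w j)/2))
            - ((∫ x, x * f x) - Ψ ((w p + w j)/2))) _ v at hmain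
    rw [← hgf] at hmain
    refine ⟨_, hmain, ?_, ?_, ?_⟩
    · intro k hk
      have hkp : k = p := Fin.ext (by omega)
      have hjne : j ≠ p := fun h => by rw [h] at hpj; omega
      subst hkp
      simp [hLA, Pi.single_apply, hjne, if_neg]
      ring
    · intro k hk; have := k.isLt; omega
    · intro k hk1 hk2 hk3
      have h1 : j ≠ k := fun h => hk1 h.symm
      have h2 : p ≠ k := fun h => hk2 (h ▸ hpj)
      simp [hLA, Pi.single_apply, h1.symm, h2.symm]
  · -- interior
    set p : Fin n := ⟨(j:ℕ)-1, by have := j.isLt; omega⟩ with hpdef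
    have hpj : (p:ℕ)+1 = (j:ℕ) := by
      have h' : (p:ℕ) = (j:ℕ)-1 := rfl
      omega
    set s : Fin n := ⟨(j:ℕ)+1, by have := j.isLt; omega⟩ with hsdef
    have hjs : (j:ℕ)+1 = (s:ℕ) := rfl
    set LA : (Fin n → ℝ) →L[ℝ] ℝ := (2⁻¹ : ℝ) •
      ((ContinuousLinearMap.proj p : (Fin n → ℝ) →L[ℝ] ℝ)
        + (ContinuousLinearMap.proj j : (Fin n → ℝ) →L[ℝ] ℝ)) with hLA
    set LB : (Fin n → ℝ) →L[ℝ] ℝ := (2⁻¹ : ℝ) •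
      ((ContinuousLinearMap.proj j : (Fin n → ℝ) →L[ℝ] ℝ)
        + (ContinuousLinearMap.proj s : (Fin n → ℝ) →L[ℝ] ℝ)) with hLB
    have hAfun : HasFDerivAt (fun w : Fin n → ℝ => (w p + w j)/2) LA v := by
      have : (fun w : Fin n → ℝ => (w p + w j)/2) = fun w => LA w := by
        funext w
        simp [hLA, ContinuousLinearMap.proj]
        ring
      rw [this]
      exact LA.hasFDerivAt
    have hBfun : HasFDerivAt (fun w : Fin n → ℝ => (w j + w s)/2) LB v := by
      have : (fun w : Fin n → ℝ => (w j + w s)/2) = fun w => LB w := by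
        funext w
        simp [hLB, ContinuousLinearMap.proj]
        ring
      rw [this]
      exact LB.hasFDerivAt
    -- eventual equality on the open set {w | w p < w s}
    have hU : IsOpen {w : Fin n → ℝ | w p < w s} :=
      isOpen_lt (continuous_apply p) (continuous_apply s)
    have hvU : v ∈ {w : Fin n → ℝ | w p < w s} := by
      exact hv (show p < s by rw [Fin.lt_def]; omega)
    have heq : Set.EqOn (fun w => gfun n f w j)
        (fun w => w j * (Φ ((w j + w s)/2) - Φ ((w p + w j)/2))
          - (Ψ ((w j + w s)/2) - Ψ ((w p + w j)/2)))
        {w : Fin n → ℝ | w p < w s} := by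
      intro w hw
      have hab : (w p + w j)/2 ≤ (w j + w s)/2 := by
        have : w p < w s := hw
        linarith
      simp only
      rw [gfun, voronoiCell_interior w p j s hpj hjs]
      have e1 : ∫ x in Set.Ioc ((w p + w j)/2) ((w j + w s)/2), f x
          = Φ ((w j + w s)/2) - Φ ((w p + w j)/2) := by
        rw [← intervalIntegral.integral_of_le hab,
          ← intervalIntegral.integral_Iic_sub_Iic hfi.integrableOn hfi.integrableOn]
      have e2 : ∫ x in Set.Ioc ((w p + w j)/2) ((w j + w s)/2), x * f x
          = Ψ ((w j + w s)/2) - Ψ ((w p + w j)/2) := by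
        rw [← intervalIntegral.integral_of_le hab,
          ← intervalIntegral.integral_Iic_sub_Iic hmom.integrableOn hmom.integrableOn]
      rw [e1, e2]
    have hev : (fun w => gfun n f w j) =ᶠ[nhds v]
        (fun w => w j * (Φ ((w j + w s)/2) - Φ ((w p + w j)/2))
          - (Ψ ((w j + w s)/2) - Ψ ((w p + w j)/2))) :=
      Filter.eventuallyEq_of_mem (hU.mem_nhds hvU) heq
    have hΦA : HasFDerivAt (fun w : Fin n → ℝ => Φ ((w p + w j)/2))
        (f ((v p + v j)/2) • LA) v := by
      have := (hasDerivAt_integral_Iic f hfi hf ((v p + v j)/2)).comp_hasFDerivAt v hAfun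
      simpa [Function.comp_def] using this
    have hΨA : HasFDerivAt (fun w : Fin n → ℝ => Ψ ((w p + w j)/2))
        ((((v p + v j)/2) * f ((v p + v j)/2)) • LA) v := by
      have := (hasDerivAt_integral_Iic _ hmom hmomc ((v p + v j)/2)).comp_hasFDerivAt v hAfun
      simpa [Function.comp_def] using this
    have hΦB : HasFDerivAt (fun w : Fin n → ℝ => Φ ((w j + w s)/2))
        (f ((v j + v s)/2) • LB) v := by
      have := (hasDerivAt_integral_Iic f hfi hf ((v j + v s)/2)).comp_hasFDerivAt v hBfun
      simpa [Function.comp_def] using this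
    have hΨB : HasFDerivAt (fun w : Fin n → ℝ => Ψ ((w j + w s)/2))
        ((((v j + v s)/2) * f ((v j + v s)/2)) • LB) v := by
      have := (hasDerivAt_integral_Iic _ hmom hmomc ((v j + v s)/2)).comp_hasFDerivAt v hBfun
      simpa [Function.comp_def] using this
    have hnice := (hjproj.mul (hΦB.sub hΦA)).sub (hΨB.sub hΨA)
    have hmain := hnice.congr_of_eventuallyEq hev
    refine ⟨_, hmain, ?_, ?_, ?_⟩
    · intro k hk
      have hkp : k = p := Fin.ext (by omega)
      have h1 : j ≠ p := fun h => by rw [h] at hpj; omega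
      have h2 : s ≠ p := fun h => by rw [← h] at hpj; omega
      subst hkp
      simp only [hLA, hLB, ContinuousLinearMap.sub_apply, ContinuousLinearMap.add_apply,
        ContinuousLinearMap.smul_apply, ContinuousLinearMap.coe_smul', Pi.smul_apply,
        ContinuousLinearMap.proj_apply, smul_eq_mul, Pi.single_apply]
      simp [h1, h2]
      ring
    · intro k hk
      have hks : k = s := Fin.ext (by omega)
      have h1 : j ≠ s := fun h => by rw [h] at hjs; omega
      have h2 : p ≠ s := fun h => by rw [h] at hpj; omega
      subst hks
      simp only [hLA, hLB, ContinuousLinearMap.sub_apply, ContinuousLinearMap.add_apply,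
        ContinuousLinearMap.smul_apply, ContinuousLinearMap.coe_smul', Pi.smul_apply,
        ContinuousLinearMap.proj_apply, smul_eq_mul, Pi.single_apply]
      simp [h1, h2]
      ring
    · intro k hk1 hk2 hk3
      have h1 : j ≠ k := fun h => hk1 h.symm
      have h2 : p ≠ k := fun h => hk2 (h ▸ hpj)
      have h3 : s ≠ k := fun h => hk3 (h ▸ hjs)
      simp only [hLA, hLB, ContinuousLinearMap.sub_apply, ContinuousLinearMap.add_apply,
        ContinuousLinearMap.smul_apply, ContinuousLinearMap.coe_smul', Pi.smul_apply,
        ContinuousLinearMap.proj_apply, smul_eq_mul, Pi.single_apply]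
      simp [h1, h2, h3]

/-- `g` is differentiable at a sorted point and its Jacobian is symmetric tridiagonal, with
off-diagonal entries `J_{j,j+1} = J_{j+1,j} = −f(m_j)(a_{j+1}−a_j)/4`. -/
theorem gfun_jacobian_tridiagonal (n : ℕ) (f : ℝ → ℝ) (hf : Continuous f)
    (hf0 : ∀ x, 0 ≤ f x) (hf1 : ∫ x, f x = 1)
    (hmom : Integrable (fun x => x * f x))
    (v : Fin n → ℝ) (hv : StrictMono v) :
    (∀ j : Fin n, DifferentiableAt ℝ (fun w => gfun n f w j) v) ∧
    (∀ j k : Fin n, (j : ℕ) + 2 ≤ (k : ℕ) ∨ (k : ℕ) + 2 ≤ (j : ℕ) →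
        fderiv ℝ (fun w => gfun n f w j) v (Pi.single k 1) = 0) ∧
    (∀ j k : Fin n, (j : ℕ) + 1 = (k : ℕ) →
        fderiv ℝ (fun w => gfun n f w j) v (Pi.single k 1)
            = -f ((v j + v k) / 2) * (v k - v j) / 4 ∧
        fderiv ℝ (fun w => gfun n f w k) v (Pi.single j 1)
            = -f ((v j + v k) / 2) * (v k - v j) / 4) := by
  have hfi : Integrable f := by
    by_contra h
    rw [MeasureTheory.integral_undef h] at hf1
    norm_num at hf1
  have key := fun j => gfun_key hf hfi hmom v hv j
  refine ⟨?_, ?_, ?_⟩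
  · intro j
    obtain ⟨D, hD, -⟩ := key j
    exact hD.differentiableAt
  · intro j k hjk
    obtain ⟨D, hD, h1, h2, h3⟩ := key j
    rw [hD.fderiv]
    exact h3 k (fun h => by subst h; omega) (by omega) (by omega)
  · intro j k hjk
    constructor
    · obtain ⟨D, hD, h1, h2, h3⟩ := key j
      rw [hD.fderiv]
      exact h2 k hjk
    · obtain ⟨D, hD, h1, h2, h3⟩ := key k
      rw [hD.fderiv]
      exact h1 j hjk
end

section
/- With g as above, the diagonal entries of the Jacobian are J_{j,j}(α) = ∫_{m_{j-1}}^{m_j} f(x) dx − f(m_{j-1})·(a_j − a_{j-1})/4 − f(m_j)·(a_{j+1} − a_j)/4 for 2 ≤ j ≤ n−1, with the boundary conventions that the terms involving m₀ = -∞ and mₙ = ∞ vanish. -/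
open MeasureTheory

/-- The interior diagonal entries of the Jacobian of `g`:
`J_{j,j} = ∫_{m_{j-1}}^{m_j} f − f(m_{j-1})(a_j−a_{j-1})/4 − f(m_j)(a_{j+1}−a_j)/4`. -/
theorem gfun_jacobian_diagonal (n : ℕ) (f : ℝ → ℝ) (hf : Continuous f)
    (hf0 : ∀ x, 0 ≤ f x) (hf1 : ∫ x, f x = 1)
    (hmom : Integrable (fun x => x * f x))
    (hdecay0 : Filter.Tendsto f (Filter.cocompact ℝ) (nhds 0))
    (hdecay1 : Filter.Tendsto (fun x => x * f x) (Filter.cocompact ℝ) (nhds 0))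
    (v : Fin n → ℝ) (hv : StrictMono v) :
    ∀ jp j js : Fin n, (jp : ℕ) + 1 = (j : ℕ) → (j : ℕ) + 1 = (js : ℕ) →
      fderiv ℝ (fun w => gfun n f w j) v (Pi.single j 1)
        = (∫ x in voronoiCell n v j, f x)
          - f ((v jp + v j) / 2) * (v j - v jp) / 4
          - f ((v j + v js) / 2) * (v js - v j) / 4 := by
  intro jp j js hjp hjs
  have hjpj : jp ≠ j := fun h => by subst h; omega
  have hjsj : js ≠ j := fun h => by subst h; omega
  have hcell : ∀ w : Fin n → ℝ, voronoiCell n w j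
      = Set.Ioc ((w jp + w j) / 2) ((w j + w js) / 2) := by
    intro w
    ext x
    simp only [voronoiCell, Set.mem_setOf_eq, Set.mem_Ioc]
    constructor
    · rintro ⟨h1, h2⟩
      exact ⟨h1 jp hjp, h2 js hjs⟩
    · rintro ⟨h1, h2⟩
      refine ⟨fun j' hj' => ?_, fun j' hj' => ?_⟩
      · have : j' = jp := Fin.ext (by omega)
        subst this; exact h1
      · have : j' = js := Fin.ext (by omega)
        subst this; exact h2
  let P : Fin n → ((Fin n → ℝ) →L[ℝ] ℝ) := fun i => ContinuousLinearMap.proj i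
  have hxf : Continuous (fun x : ℝ => x * f x) := continuous_id.mul hf
  set Fi : ℝ → ℝ := fun t => ∫ x in (0:ℝ)..t, f x with hFi
  set Gi : ℝ → ℝ := fun t => ∫ x in (0:ℝ)..t, x * f x with hGi
  have keyF : ∀ p q : ℝ, p ≤ q → Fi q - Fi p = ∫ x in Set.Ioc p q, f x := by
    intro p q hpq
    rw [← intervalIntegral.integral_of_le hpq]
    have h := intervalIntegral.integral_add_adjacent_intervals
      (hf.intervalIntegrable (μ := volume) 0 p) (hf.intervalIntegrable p q)
    simp only [Fi]
    linarith [h]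
  have keyG : ∀ p q : ℝ, p ≤ q →
      Gi q - Gi p = ∫ x in Set.Ioc p q, x * f x := by
    intro p q hpq
    rw [← intervalIntegral.integral_of_le hpq]
    have h := intervalIntegral.integral_add_adjacent_intervals
      (hxf.intervalIntegrable (μ := volume) 0 p) (hxf.intervalIntegrable p q)
    simp only [Gi]
    linarith [h]
  -- linear pieces
  have hpj : HasFDerivAt (fun w : Fin n → ℝ => w j)
      (P j) v := (P j).hasFDerivAt
  have hpjp : HasFDerivAt (fun w : Fin n → ℝ => w jp)
      (P jp) v := (P jp).hasFDerivAt
  have hpjs : HasFDerivAt (fun w : Fin n → ℝ => w js)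
      (P js) v := (P js).hasFDerivAt
  have hA : HasFDerivAt (fun w : Fin n → ℝ => (w jp + w j) / 2)
      ((2:ℝ)⁻¹ • (P jp + P j)) v := by
    have := (hpjp.add hpj).mul_const ((2:ℝ)⁻¹)
    simpa [div_eq_mul_inv, smul_smul] using this
  have hB : HasFDerivAt (fun w : Fin n → ℝ => (w j + w js) / 2)
      ((2:ℝ)⁻¹ • (P j + P js)) v := by
    have := (hpj.add hpjs).mul_const ((2:ℝ)⁻¹)
    simpa [div_eq_mul_inv, smul_smul] using this
  set ma : ℝ := (v jp + v j) / 2 with hma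
  set mb : ℝ := (v j + v js) / 2 with hmb
  have hFa : HasFDerivAt (fun w : Fin n → ℝ => Fi ((w jp + w j) / 2))
      (f ma • ((2:ℝ)⁻¹ • (P jp + P j))) v :=
    by have := HasDerivAt.comp_hasFDerivAt v ((hf.integral_hasStrictDerivAt 0 ma).hasDerivAt) hA; exact this
  have hFb : HasFDerivAt (fun w : Fin n → ℝ => Fi ((w j + w js) / 2))
      (f mb • ((2:ℝ)⁻¹ • (P j + P js))) v :=
    by have := HasDerivAt.comp_hasFDerivAt v ((hf.integral_hasStrictDerivAt 0 mb).hasDerivAt) hB; exact this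
  have hGa : HasFDerivAt (fun w : Fin n → ℝ => Gi ((w jp + w j) / 2))
      ((ma * f ma) • ((2:ℝ)⁻¹ • (P jp + P j))) v :=
    by have := HasDerivAt.comp_hasFDerivAt v ((hxf.integral_hasStrictDerivAt 0 ma).hasDerivAt) hA; exact this
  have hGb : HasFDerivAt (fun w : Fin n → ℝ => Gi ((w j + w js) / 2))
      ((mb * f mb) • ((2:ℝ)⁻¹ • (P j + P js))) v :=
    by have := HasDerivAt.comp_hasFDerivAt v ((hxf.integral_hasStrictDerivAt 0 mb).hasDerivAt) hB; exact this
  have hG : HasFDerivAt (fun w : Fin n → ℝ =>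
      w j * (Fi ((w j + w js) / 2) - Fi ((w jp + w j) / 2))
        - (Gi ((w j + w js) / 2) - Gi ((w jp + w j) / 2)))
      ((v j • (f mb • ((2:ℝ)⁻¹ • (P j + P js))
          - f ma • ((2:ℝ)⁻¹ • (P jp + P j)))
        + (Fi mb - Fi ma) • P j)
        - ((mb * f mb) • ((2:ℝ)⁻¹ • (P j + P js))
          - (ma * f ma) • ((2:ℝ)⁻¹ • (P jp + P j)))) v :=
    (hpj.mul (hFb.sub hFa)).sub (hGb.sub hGa)
  -- eventual equality
  have hjlt : jp < js := by
    rw [Fin.lt_def]; omega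
  have hUopen : IsOpen {w : Fin n → ℝ | w jp < w js} :=
    isOpen_lt (continuous_apply jp) (continuous_apply js)
  have hvU : v ∈ {w : Fin n → ℝ | w jp < w js} := hv hjlt
  have hev : (fun w : Fin n → ℝ => gfun n f w j) =ᶠ[nhds v]
      (fun w : Fin n → ℝ =>
        w j * (Fi ((w j + w js) / 2) - Fi ((w jp + w j) / 2))
          - (Gi ((w j + w js) / 2) - Gi ((w jp + w j) / 2))) := by
    filter_upwards [hUopen.mem_nhds hvU] with w hw
    have hle : (w jp + w j) / 2 ≤ (w j + w js) / 2 := by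
      linarith [show w jp < w js from hw]
    rw [gfun, hcell w, ← keyF _ _ hle, ← keyG _ _ hle]
  have hF : HasFDerivAt (fun w : Fin n → ℝ => gfun n f w j)
      ((v j • (f mb • ((2:ℝ)⁻¹ • (P j + P js))
          - f ma • ((2:ℝ)⁻¹ • (P jp + P j)))
        + (Fi mb - Fi ma) • P j)
        - ((mb * f mb) • ((2:ℝ)⁻¹ • (P j + P js))
          - (ma * f ma) • ((2:ℝ)⁻¹ • (P jp + P j)))) v :=
    hG.congr_of_eventuallyEq hev
  rw [hF.fderiv]
  have hmale : ma ≤ mb := by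
    have h1 : v jp < v j := hv (by rw [Fin.lt_def]; omega)
    have h2 : v j < v js := hv (by rw [Fin.lt_def]; omega)
    rw [hma, hmb]; linarith
  rw [hcell v, ← keyF _ _ hmale]
  simp only [ContinuousLinearMap.sub_apply, ContinuousLinearMap.add_apply,
    ContinuousLinearMap.smul_apply, P, ContinuousLinearMap.proj_apply, smul_eq_mul,
    Pi.single_eq_same, Pi.single_eq_of_ne hjpj, Pi.single_eq_of_ne hjsj]
  rw [hma, hmb]
  ring
end
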